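/- Let 0 < p < 1, 0 < β < 1, σ > 0, μ > 0, and let B, Z₀, Z₁ be independent random variables on a probability space with P(B = 1) = p = 1 − P(B = 0), Z₀ ~ N(0, μ), Z₁ ~ N(0, σ² + μ). Put Q = Z₁ if B = 1 and Q = Z₀ if B = 0, and let τ′ = 2 · ((σ² + μ)/(σ²/μ)) · ln( β(1 − p) · √(σ²/μ + 1) / ((1 − β)p) ). Assume τ′ ≥ 0, and let b̂(q) = 1 if q² > τ′ and b̂(q) = 0 otherwise. Then E[ β · 1_{b̂(Q) = 1, B = 0} + (1 − β) · 1_{b̂(Q) = 0, B = 1} ] = β(1 − p) · erfc(√(τ′/(2μ))) + (1 − β)p · erf(√(τ′/(2(σ² + μ)))). -/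

import Mathlib

open MeasureTheory ProbabilityTheory Real

/-- The Gauss error function `erf x = (2/√π) ∫₀ˣ e^{−t²} dt`. -/
noncomputable def erf (x : ℝ) : ℝ :=
  (2 / Real.sqrt Real.pi) * ∫ t in (0:ℝ)..x, Real.exp (-t ^ 2)

/-- The complementary error function `erfc = 1 − erf`. -/
noncomputable def erfc (x : ℝ) : ℝ := 1 - erf x

lemma gauss_sq_le (v : NNReal) (hv : v ≠ 0) {a : ℝ} (ha : 0 ≤ a) :
    (gaussianReal 0 v) {x : ℝ | x ^ 2 ≤ a}
      = ENNReal.ofReal (erf (Real.sqrt (a / (2 * v)))) := by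
  have hv0 : (0:ℝ) < v := by positivity
  rw [gaussianReal_apply_eq_integral 0 hv]
  congr 1
  have hset : {x : ℝ | x ^ 2 ≤ a} = Set.Icc (-Real.sqrt a) (Real.sqrt a) := by
    ext x
    simp only [Set.mem_setOf_eq, Set.mem_Icc]
    constructor
    · intro h
      constructor <;> nlinarith [Real.sq_sqrt ha, Real.sqrt_nonneg a]
    · rintro ⟨h1, h2⟩
      nlinarith [Real.sq_sqrt ha, Real.sqrt_nonneg a]
  have hle : -Real.sqrt a ≤ Real.sqrt a := by
    have := Real.sqrt_nonneg a; linarith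
  rw [hset, MeasureTheory.integral_Icc_eq_integral_Ioc,
    ← intervalIntegral.integral_of_le hle]
  have hs : (0:ℝ) < Real.sqrt (2 * v) := Real.sqrt_pos.2 (by positivity)
  have hfun : ∀ x : ℝ, gaussianPDFReal 0 v x
      = (Real.sqrt (2 * π * v))⁻¹ * Real.exp (-(x / Real.sqrt (2 * v)) ^ 2) := by
    intro x
    rw [gaussianPDFReal]
    congr 2
    rw [div_pow, Real.sq_sqrt (by positivity)]
    field_simp
    ring
  simp_rw [hfun]
  rw [intervalIntegral.integral_comp_div (fun t => (Real.sqrt (2 * π * v))⁻¹ * Real.exp (-t ^ 2)) hs.ne']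
  set c : ℝ := Real.sqrt a / Real.sqrt (2 * v) with hc
  have hcc : c = Real.sqrt (a / (2 * v)) := by
    rw [hc, Real.sqrt_div ha]
  have hneg : -Real.sqrt a / Real.sqrt (2 * v) = -c := by rw [hc]; ring
  rw [hneg]
  have hsym : (∫ t in (-c)..c, (Real.sqrt (2 * π * v))⁻¹ * Real.exp (-t ^ 2))
      = 2 * ∫ t in (0:ℝ)..c, (Real.sqrt (2 * π * v))⁻¹ * Real.exp (-t ^ 2) := by
    have h1 : (∫ t in (-c)..(0:ℝ), (Real.sqrt (2 * π * v))⁻¹ * Real.exp (-t ^ 2))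
        = ∫ t in (0:ℝ)..c, (Real.sqrt (2 * π * v))⁻¹ * Real.exp (-t ^ 2) := by
      have hneg2 := intervalIntegral.integral_comp_neg (a := (0:ℝ)) (b := c)
        (f := fun t => (Real.sqrt (2 * π * v))⁻¹ * Real.exp (-t ^ 2))
      simp only [neg_zero] at hneg2
      rw [← hneg2]
      apply intervalIntegral.integral_congr
      intro x _
      simp [neg_sq]
    have h2 := intervalIntegral.integral_add_adjacent_intervals
      (a := -c) (b := 0) (c := c) (μ := volume)
      (f := fun t => (Real.sqrt (2 * π * v))⁻¹ * Real.exp (-t ^ 2)) ?_ ?_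
    · rw [← h2, h1]; ring
    · exact (Continuous.intervalIntegrable (by continuity) _ _)
    · exact (Continuous.intervalIntegrable (by continuity) _ _)
  rw [hsym, intervalIntegral.integral_const_mul, hcc]
  rw [erf]
  have hsqrt : Real.sqrt (2 * π * v) = Real.sqrt π * Real.sqrt (2 * v) := by
    rw [← Real.sqrt_mul Real.pi_pos.le]
    ring_nf
  rw [hsqrt, smul_eq_mul]
  have hπ : (0:ℝ) < Real.sqrt π := Real.sqrt_pos.2 Real.pi_pos
  field_simp

lemma erf_nonneg' {x : ℝ} (hx : 0 ≤ x) : 0 ≤ erf x :=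
  mul_nonneg (by positivity)
    (intervalIntegral.integral_nonneg hx (fun t _ => (Real.exp_pos _).le))


/-- **Corollary 3, part 1 (per-coordinate MMWSE).**  In the sparse Gaussian mixture model,
the expected weighted-support error of the threshold detector `b̂(q) = 1_{q² > τ′}` equals
`β (1 − p) erfc(√(τ′/(2μ))) + (1 − β) p erf(√(τ′/(2(σ² + μ))))`. -/
theorem mmwse_threshold_expected_weighted_error
    {Ω : Type*} [MeasurableSpace Ω] (P : Measure Ω) [IsProbabilityMeasure P]
    (p β : ℝ) (hp : 0 < p) (hp1 : p < 1) (hβ : 0 < β) (hβ1 : β < 1)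
    (σ μ : NNReal) (hσ : 0 < σ) (hμ : 0 < μ)
    (B Z₀ Z₁ : Ω → ℝ) (hB : Measurable B) (hZ₀ : Measurable Z₀) (hZ₁ : Measurable Z₁)
    (hindep : iIndepFun ![B, Z₀, Z₁] P)
    (hB1 : P {ω | B ω = 1} = ENNReal.ofReal p)
    (hB0 : P {ω | B ω = 0} = ENNReal.ofReal (1 - p))
    (hZ₀law : Measure.map Z₀ P = gaussianReal 0 μ)
    (hZ₁law : Measure.map Z₁ P = gaussianReal 0 (σ ^ 2 + μ))
    (Q : Ω → ℝ) (hQ : Q = fun ω => if B ω = 1 then Z₁ ω else Z₀ ω)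
    (τ' : ℝ)
    (hτ' : τ' = 2 * (((σ:ℝ) ^ 2 + μ) / ((σ:ℝ) ^ 2 / μ))
        * Real.log (β * (1 - p) * Real.sqrt ((σ:ℝ) ^ 2 / μ + 1) / ((1 - β) * p)))
    (hτ'0 : 0 ≤ τ')
    (bhat : ℝ → ℝ) (hbhat : bhat = fun q => if τ' < q ^ 2 then 1 else 0) :
    ∫ ω, (β * (if bhat (Q ω) = 1 ∧ B ω = 0 then 1 else 0)
        + (1 - β) * (if bhat (Q ω) = 0 ∧ B ω = 1 then 1 else 0)) ∂P
      = β * (1 - p) * erfc (Real.sqrt (τ' / (2 * μ)))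
        + (1 - β) * p * erf (Real.sqrt (τ' / (2 * ((σ:ℝ) ^ 2 + μ)))) := by
  simp only [erfc]
  -- sets
  set S₀ : Set ℝ := {x | τ' < x ^ 2} with hS₀
  set S₁ : Set ℝ := {x | x ^ 2 ≤ τ'} with hS₁
  have hmS₀ : MeasurableSet S₀ := measurableSet_lt measurable_const (by measurability)
  have hmS₁ : MeasurableSet S₁ := measurableSet_le (by measurability) measurable_const
  set A : Set Ω := B ⁻¹' {0} ∩ Z₀ ⁻¹' S₀ with hA
  set C : Set Ω := B ⁻¹' {1} ∩ Z₁ ⁻¹' S₁ with hC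
  have hmA : MeasurableSet A := (hB (measurableSet_singleton 0)).inter (hZ₀ hmS₀)
  have hmC : MeasurableSet C := (hB (measurableSet_singleton 1)).inter (hZ₁ hmS₁)
  -- rewrite integrand
  have hfeq : ∀ ω, (β * (if bhat (Q ω) = 1 ∧ B ω = 0 then 1 else 0)
        + (1 - β) * (if bhat (Q ω) = 0 ∧ B ω = 1 then 1 else 0))
      = A.indicator (fun _ => β) ω + C.indicator (fun _ => 1 - β) ω := by
    intro ω
    subst hQ hbhat
    by_cases h1 : B ω = 1
    · have h0 : ¬ B ω = 0 := by rw [h1]; norm_num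
      by_cases h3 : τ' < (Z₁ ω) ^ 2
      · simp [hA, hC, hS₀, hS₁, Set.indicator, h0, h1, h3, not_le.2 h3]
      · simp [hA, hC, hS₀, hS₁, Set.indicator, h0, h1, h3, not_lt.1 h3]
    · by_cases h0 : B ω = 0 <;> by_cases h2 : τ' < (Z₀ ω) ^ 2 <;>
        simp [hA, hC, hS₀, hS₁, Set.indicator, h0, h1, h2]
  simp only [hfeq]
  rw [integral_add ((integrable_const β).indicator hmA)
    ((integrable_const (1 - β)).indicator hmC),
    integral_indicator_const _ hmA, integral_indicator_const _ hmC]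
  -- independence
  have hind01 : IndepFun B Z₀ P := by
    have := hindep.indepFun (i := 0) (j := 1) (by decide)
    simpa using this
  have hind02 : IndepFun B Z₁ P := by
    have := hindep.indepFun (i := 0) (j := 2) (by decide)
    simpa using this
  -- measure of A
  have hμne : (μ : NNReal) ≠ 0 := hμ.ne'
  have hvne : (σ ^ 2 + μ : NNReal) ≠ 0 := by positivity
  have hPA : P A = ENNReal.ofReal (1 - p)
      * (ENNReal.ofReal 1 - ENNReal.ofReal (erf (Real.sqrt (τ' / (2 * μ))))) := by
    rw [hA, hind01.measure_inter_preimage_eq_mul _ _ (measurableSet_singleton 0) hmS₀]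
    have hB0' : P (B ⁻¹' {0}) = ENNReal.ofReal (1 - p) := by
      rw [← hB0]; rfl
    rw [hB0', ← Measure.map_apply hZ₀ hmS₀, hZ₀law]
    congr 1
    have hcompl : S₀ = S₁ᶜ := by
      ext x; simp [hS₀, hS₁, not_le]
    rw [hcompl, measure_compl hmS₁ (measure_ne_top _ _),
      gauss_sq_le μ hμne hτ'0]
    simp
  have hPC : P C = ENNReal.ofReal p
      * ENNReal.ofReal (erf (Real.sqrt (τ' / (2 * ((σ:ℝ) ^ 2 + μ))))) := by
    rw [hC, hind02.measure_inter_preimage_eq_mul _ _ (measurableSet_singleton 1) hmS₁]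
    have hB1' : P (B ⁻¹' {1}) = ENNReal.ofReal p := by
      rw [← hB1]; rfl
    rw [hB1', ← Measure.map_apply hZ₁ hmS₁, hZ₁law, gauss_sq_le _ hvne hτ'0]
    norm_num [NNReal.coe_add, NNReal.coe_pow]
  rw [measureReal_def, measureReal_def, hPA, hPC]
  have herf0 : 0 ≤ erf (Real.sqrt (τ' / (2 * μ))) := erf_nonneg' (Real.sqrt_nonneg _)
  have herf1 : 0 ≤ erf (Real.sqrt (τ' / (2 * ((σ:ℝ) ^ 2 + μ)))) :=
    erf_nonneg' (Real.sqrt_nonneg _)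
  have hle1 : ENNReal.ofReal (erf (Real.sqrt (τ' / (2 * μ)))) ≤ ENNReal.ofReal 1 := by
    rw [← gauss_sq_le μ hμne hτ'0]
    simpa using prob_le_one (μ := gaussianReal 0 μ) (s := S₁)
  rw [ENNReal.toReal_mul, ENNReal.toReal_mul,
    ENNReal.toReal_sub_of_le hle1 (by simp),
    ENNReal.toReal_ofReal (by linarith), ENNReal.toReal_ofReal herf0,
    ENNReal.toReal_ofReal herf1, ENNReal.toReal_ofReal hp.le]
  simp only [ENNReal.toReal_ofReal (le_of_lt one_pos), smul_eq_mul]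
  ring
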